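/- Fix t₀ > 0 and u, v ∈ [0,1]. Then ψ(s,t;u,v) → min(u,v) as (s,t) → (t₀,t₀) with s,t > 0; i.e., for every ε > 0 there is δ > 0 such that for all s,t > 0 with |s−t₀| < δ and |t−t₀| < δ one has |ψ(s,t;u,v) − min(u,v)| < ε. -/

import Mathlib

open MeasureTheory Set Filter

/-- Density of the standard normal distribution (φ). -/
noncomputable def stdNormalPDF (x : ℝ) : ℝ := (Real.sqrt (2 * Real.pi))⁻¹ * Real.exp (-x ^ 2 / 2)

/-- Cumulative distribution function of the standard normal distribution (Φ). -/
noncomputable def stdNormalCDF (x : ℝ) : ℝ := ∫ t in Set.Iic x, stdNormalPDF t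

/-- The standard normal quantile function (Φ⁻¹), the inverse of Φ on (0,1). -/
noncomputable def stdNormalCDFInv : ℝ → ℝ := Function.invFun stdNormalCDF

/-- The integrand of the Brownian-copula kernel; the `if` branches encode the
conventions Φ⁻¹(0) = -∞ (so Φ(·) = 0) and Φ⁻¹(1) = +∞ (so Φ(·) = 1). -/
noncomputable def psiIntegrand (s t v w : ℝ) : ℝ :=
  if v ≤ 0 then 0
  else if 1 ≤ v then 1
  else stdNormalCDF ((Real.sqrt (max s t) * stdNormalCDFInv v -
      Real.sqrt (min s t) * stdNormalCDFInv w) / Real.sqrt |t - s|)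

/-- The Brownian-copula kernel ψ(s,t;u,v). -/
noncomputable def psi (s t u v : ℝ) : ℝ :=
  if 0 < |t - s| then ∫ w in (0:ℝ)..u, psiIntegrand s t v w
  else if 0 < t then min u v
  else u * v

open Topology

section AuxLemmas

lemma stdNormalPDF_pos (x : ℝ) : 0 < stdNormalPDF x := by
  unfold stdNormalPDF
  have := Real.pi_pos
  positivity

lemma stdNormalPDF_eq :
    stdNormalPDF = fun x => (Real.sqrt (2 * Real.pi))⁻¹ * Real.exp (-(1/2 : ℝ) * x ^ 2) := by
  funext x; unfold stdNormalPDF; ring_nf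

lemma stdNormalPDF_integrable : Integrable stdNormalPDF := by
  rw [stdNormalPDF_eq]
  exact (integrable_exp_neg_mul_sq (by norm_num)).const_mul _

lemma integral_stdNormalPDF : ∫ x, stdNormalPDF x = 1 := by
  rw [stdNormalPDF_eq]
  rw [MeasureTheory.integral_const_mul, integral_gaussian]
  rw [show Real.pi / (1/2 : ℝ) = 2 * Real.pi by ring]
  exact inv_mul_cancel₀ (by positivity)

lemma stdNormalCDF_nonneg (x : ℝ) : 0 ≤ stdNormalCDF x :=
  setIntegral_nonneg measurableSet_Iic fun y _ => (stdNormalPDF_pos y).le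

lemma stdNormalCDF_le_one (x : ℝ) : stdNormalCDF x ≤ 1 := by
  rw [← integral_stdNormalPDF]
  exact setIntegral_le_integral stdNormalPDF_integrable
    (Eventually.of_forall fun y => (stdNormalPDF_pos y).le)

lemma stdNormalCDF_sub (a b : ℝ) :
    stdNormalCDF b - stdNormalCDF a = ∫ x in a..b, stdNormalPDF x :=
  intervalIntegral.integral_Iic_sub_Iic stdNormalPDF_integrable.integrableOn
    stdNormalPDF_integrable.integrableOn

lemma stdNormalCDF_strictMono : StrictMono stdNormalCDF := by
  intro a b hab
  have h := stdNormalCDF_sub a b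
  have hpos : 0 < ∫ x in a..b, stdNormalPDF x :=
    intervalIntegral.intervalIntegral_pos_of_pos
      stdNormalPDF_integrable.intervalIntegrable (fun x => stdNormalPDF_pos x) hab
  linarith

lemma stdNormalCDF_continuous : Continuous stdNormalCDF := by
  have h : stdNormalCDF = fun b => (∫ x in (0:ℝ)..b, stdNormalPDF x) + stdNormalCDF 0 := by
    funext b
    have := stdNormalCDF_sub 0 b
    linarith
  rw [h]
  exact (intervalIntegral.continuous_primitive
    (fun a b => stdNormalPDF_integrable.intervalIntegrable) 0).add continuous_const

lemma tendsto_stdNormalCDF_nat :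
    Tendsto (fun n : ℕ => stdNormalCDF (n : ℝ)) atTop (𝓝 1) := by
  have h := MeasureTheory.tendsto_setIntegral_of_monotone (μ := volume) (f := stdNormalPDF)
    (s := fun n : ℕ => Iic (n : ℝ)) (fun n => measurableSet_Iic)
    (fun m n hmn => Iic_subset_Iic.2 (by exact_mod_cast hmn))
    stdNormalPDF_integrable.integrableOn
  have hU : (⋃ n : ℕ, Iic ((n : ℝ))) = univ := by
    ext x
    simp only [mem_iUnion, mem_Iic, mem_univ, iff_true]
    exact exists_nat_ge x
  rw [hU] at h
  simpa [stdNormalCDF, Measure.restrict_univ, integral_stdNormalPDF] using h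

lemma tendsto_stdNormalCDF_neg_nat :
    Tendsto (fun n : ℕ => stdNormalCDF (-(n : ℝ))) atTop (𝓝 0) := by
  have h := MeasureTheory.tendsto_setIntegral_of_antitone (μ := volume) (f := stdNormalPDF)
    (s := fun n : ℕ => Iic (-(n : ℝ))) (fun n => measurableSet_Iic)
    (fun m n hmn => Iic_subset_Iic.2 (neg_le_neg (by exact_mod_cast hmn)))
    ⟨0, stdNormalPDF_integrable.integrableOn⟩
  have hI : (⋂ n : ℕ, Iic (-(n : ℝ))) = ∅ := by
    ext x
    simp only [mem_iInter, mem_Iic, mem_empty_iff_false, iff_false, not_forall, not_le]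
    obtain ⟨n, hn⟩ := exists_nat_gt (-x)
    exact ⟨n, by linarith⟩
  rw [hI] at h
  simpa [stdNormalCDF] using h

lemma exists_stdNormalCDF_bounds {ε : ℝ} (hε : 0 < ε) :
    ∃ K : ℝ, 1 ≤ K ∧ (∀ x, K ≤ x → 1 - ε < stdNormalCDF x) ∧
      (∀ x, x ≤ -K → stdNormalCDF x < ε) := by
  obtain ⟨n₁, hn₁⟩ := (tendsto_stdNormalCDF_nat.eventually
    (eventually_gt_nhds (by linarith : (1:ℝ) - ε < 1))).exists
  obtain ⟨n₂, hn₂⟩ := (tendsto_stdNormalCDF_neg_nat.eventually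
    (eventually_lt_nhds hε)).exists
  refine ⟨max 1 (max (n₁ : ℝ) (n₂ : ℝ)), le_max_left _ _, fun x hx => ?_, fun x hx => ?_⟩
  · have h1 : (n₁ : ℝ) ≤ x := le_trans (le_trans (le_max_left _ _) (le_max_right _ _)) hx
    exact lt_of_lt_of_le hn₁ (stdNormalCDF_strictMono.monotone h1)
  · have h2 : x ≤ -(n₂ : ℝ) := by
      have : (n₂ : ℝ) ≤ max 1 (max (n₁ : ℝ) (n₂ : ℝ)) :=
        le_trans (le_trans (le_max_right _ _) (le_max_right _ _)) le_rfl
      linarith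
    exact lt_of_le_of_lt (stdNormalCDF_strictMono.monotone h2) hn₂

lemma stdNormalCDF_surj {y : ℝ} (hy : y ∈ Ioo (0:ℝ) 1) : ∃ x, stdNormalCDF x = y := by
  obtain ⟨hy0, hy1⟩ := hy
  obtain ⟨K, hK1, hK2, hK3⟩ := exists_stdNormalCDF_bounds (ε := min y (1 - y))
    (lt_min hy0 (by linarith))
  have h1 : stdNormalCDF (-K) < y := lt_of_lt_of_le (hK3 _ le_rfl) (min_le_left _ _)
  have h2 : y < stdNormalCDF K := by
    have := hK2 K le_rfl
    have := min_le_right y (1 - y)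
    linarith
  have hKK : (-K : ℝ) ≤ K := by linarith
  have := intermediate_value_Icc hKK stdNormalCDF_continuous.continuousOn
  obtain ⟨x, _, hfx⟩ := this ⟨h1.le, h2.le⟩
  exact ⟨x, hfx⟩

lemma stdNormalCDF_inv_eq {y : ℝ} (hy : y ∈ Ioo (0:ℝ) 1) :
    stdNormalCDF (stdNormalCDFInv y) = y :=
  Function.invFun_eq (stdNormalCDF_surj hy)

lemma stdNormalCDFInv_lt_inv {y z : ℝ} (hy : y ∈ Ioo (0:ℝ) 1) (hz : z ∈ Ioo (0:ℝ) 1)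
    (hyz : y < z) : stdNormalCDFInv y < stdNormalCDFInv z := by
  have h1 := stdNormalCDF_inv_eq hy
  have h2 := stdNormalCDF_inv_eq hz
  by_contra h
  push_neg at h
  have := stdNormalCDF_strictMono.monotone h
  linarith

lemma stdNormalCDFInv_monotoneOn : MonotoneOn stdNormalCDFInv (Ioo (0:ℝ) 1) := by
  intro y hy z hz hyz
  rcases eq_or_lt_of_le hyz with rfl | h
  · exact le_rfl
  · exact (stdNormalCDFInv_lt_inv hy hz h).le

lemma abs_stdNormalCDF_le_one (x : ℝ) : |stdNormalCDF x| ≤ 1 :=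
  abs_le.2 ⟨by linarith [stdNormalCDF_nonneg x], stdNormalCDF_le_one x⟩

lemma intervalIntegrable_of_bdd {f : ℝ → ℝ} {u C : ℝ} (hu : 0 ≤ u)
    (hm : AEMeasurable f (volume.restrict (Icc 0 u))) (hb : ∀ x, |f x| ≤ C) :
    IntervalIntegrable f volume 0 u := by
  apply MeasureTheory.IntegrableOn.intervalIntegrable
  rw [uIcc_of_le hu]
  refine Integrable.mono' (integrableOn_const (C := C) ?_) hm.aestronglyMeasurable
    (Eventually.of_forall fun x => by simpa using hb x)
  exact measure_Icc_lt_top.ne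

lemma integral_indicator_Iio {u v : ℝ} (hu0 : 0 ≤ u) (hv0 : 0 ≤ v) :
    ∫ w in (0:ℝ)..u, (Iio v).indicator (fun _ => (1:ℝ)) w = min u v := by
  rw [intervalIntegral.integral_of_le hu0,
    MeasureTheory.integral_indicator_const (1:ℝ) measurableSet_Iio,
    measureReal_restrict_apply measurableSet_Iio, measureReal_def]
  have h1 : Ioo (0:ℝ) (min u v) ⊆ Iio v ∩ Ioc 0 u := by
    rintro w ⟨h0, hm⟩
    exact ⟨lt_of_lt_of_le hm (min_le_right _ _), h0, le_trans hm.le (min_le_left _ _)⟩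
  have h2 : Iio v ∩ Ioc (0:ℝ) u ⊆ Ioc 0 (min u v) := by
    rintro w ⟨hw1, hw2, hw3⟩
    exact ⟨hw2, le_min hw3 hw1.le⟩
  have hvol : volume (Iio v ∩ Ioc (0:ℝ) u) = ENNReal.ofReal (min u v) := by
    refine le_antisymm (le_trans (measure_mono h2) ?_) (le_trans ?_ (measure_mono h1))
    · rw [Real.volume_Ioc, sub_zero]
    · rw [Real.volume_Ioo, sub_zero]
  rw [hvol, smul_eq_mul, mul_one, ENNReal.toReal_ofReal (le_min hu0 hv0)]

end AuxLemmas

set_option maxHeartbeats 1000000 in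
/-- For t₀ > 0 and u, v ∈ [0,1], ψ(s,t;u,v) → min(u,v) as (s,t) → (t₀,t₀) with s,t > 0. -/
theorem psi_tendsto_min (t₀ u v : ℝ) (ht₀ : 0 < t₀)
    (hu : u ∈ Set.Icc (0:ℝ) 1) (hv : v ∈ Set.Icc (0:ℝ) 1) :
    ∀ ε > 0, ∃ δ > 0, ∀ s t : ℝ, 0 < s → 0 < t →
      |s - t₀| < δ → |t - t₀| < δ → |psi s t u v - min u v| < ε := by
  obtain ⟨hu0, hu1⟩ := hu
  obtain ⟨hv0, hv1⟩ := hv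
  intro ε hε
  by_cases hv0' : v ≤ 0
  · -- v = 0
    refine ⟨1, one_pos, fun s t hs ht _ _ => ?_⟩
    have hmin : min u v = 0 := by
      have : v = 0 := le_antisymm hv0' hv0
      rw [this, min_eq_right hu0]
    unfold psi
    by_cases hd : 0 < |t - s|
    · rw [if_pos hd]
      have hzero : (fun w => psiIntegrand s t v w) = fun _ => (0:ℝ) :=
        funext fun w => by rw [psiIntegrand, if_pos hv0']
      rw [hzero, intervalIntegral.integral_zero, hmin]
      simpa using hε
    · rw [if_neg hd, if_pos ht]
      simpa using hε
  by_cases hv1' : 1 ≤ v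
  · -- v = 1
    refine ⟨1, one_pos, fun s t hs ht _ _ => ?_⟩
    have hmin : min u v = u := min_eq_left (le_trans hu1 hv1')
    unfold psi
    by_cases hd : 0 < |t - s|
    · rw [if_pos hd]
      have hone : (fun w => psiIntegrand s t v w) = fun _ => (1:ℝ) :=
        funext fun w => by rw [psiIntegrand, if_neg hv0', if_pos hv1']
      rw [hone, intervalIntegral.integral_const, hmin]
      simpa using hε
    · rw [if_neg hd, if_pos ht]
      simpa using hε
  -- main case : 0 < v < 1
  push_neg at hv0' hv1'
  have hvI : v ∈ Ioo (0:ℝ) 1 := ⟨hv0', hv1'⟩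
  set a := stdNormalCDFInv v with ha
  set η := min (ε/8) (min (v/2) ((1-v)/2)) with hη
  have hηpos : 0 < η := by
    apply lt_min (by linarith)
    exact lt_min (by linarith) (by linarith)
  have hηε : η ≤ ε/8 := min_le_left _ _
  have hηv : η ≤ v/2 := le_trans (min_le_right _ _) (min_le_left _ _)
  have hηv' : η ≤ (1-v)/2 := le_trans (min_le_right _ _) (min_le_right _ _)
  have hw₁ : v - η ∈ Ioo (0:ℝ) 1 := ⟨by linarith, by linarith⟩
  have hw₂ : v + η ∈ Ioo (0:ℝ) 1 := ⟨by linarith, by linarith⟩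
  set b₁ := stdNormalCDFInv (v - η) with hb₁
  set b₂ := stdNormalCDFInv (v + η) with hb₂
  have hb₁a : b₁ < a := stdNormalCDFInv_lt_inv hw₁ hvI (by linarith)
  have hab₂ : a < b₂ := stdNormalCDFInv_lt_inv hvI hw₂ (by linarith)
  set c := min (a - b₁) (b₂ - a) with hc
  have hcpos : 0 < c := lt_min (by linarith) (by linarith)
  obtain ⟨K, hK1, hK2, hK3⟩ := exists_stdNormalCDF_bounds (ε := ε/2) (by linarith)
  have hKpos : 0 < K := lt_of_lt_of_le one_pos hK1
  set C := Real.sqrt (t₀/2) with hC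
  have hCpos : 0 < C := Real.sqrt_pos.2 (by linarith)
  have habs : (0:ℝ) < |a| + 1 := by positivity
  set δ := min (t₀/2) (min (C^2*c/(|a|+1)/2) ((C*c/(2*K))^2/2)) with hδ
  have hδpos : 0 < δ := by
    apply lt_min (by linarith)
    exact lt_min (by positivity) (by positivity)
  refine ⟨δ, hδpos, fun s t hs ht hsδ htδ => ?_⟩
  by_cases hd : 0 < |t - s|
  swap
  · unfold psi
    rw [if_neg hd, if_pos ht]
    simpa using hε
  set dd := |t - s| with hdd
  set D := Real.sqrt dd with hDdef
  have hDpos : 0 < D := Real.sqrt_pos.2 hd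
  set m := min s t with hm
  set M := max s t with hM
  have hmM : m ≤ M := min_le_max
  have hMm : M - m = dd := by
    rw [hM, hm, hdd, max_sub_min_eq_abs, abs_sub_comm]
  have hδt : δ ≤ t₀/2 := min_le_left _ _
  have hmt : t₀/2 ≤ m := by
    have h1 := (abs_lt.1 hsδ).1
    have h2 := (abs_lt.1 htδ).1
    have h3 : t₀ - δ < min s t := lt_min (by linarith) (by linarith)
    rw [hm]; linarith
  have hm0 : (0:ℝ) ≤ m := by linarith
  have hM0 : (0:ℝ) ≤ M := le_trans hm0 hmM
  have hCm : C ≤ Real.sqrt m := by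
    rw [hC]; exact Real.sqrt_le_sqrt hmt
  have hCM : C ≤ Real.sqrt M := le_trans hCm (Real.sqrt_le_sqrt hmM)
  have hd2δ : dd < 2*δ := by
    calc dd = |t - s| := hdd
    _ ≤ |t - t₀| + |t₀ - s| := abs_sub_le t t₀ s
    _ = |t - t₀| + |s - t₀| := by rw [abs_sub_comm t₀ s]
    _ < δ + δ := by linarith
    _ = 2*δ := by ring
  have hδ2 : 2*δ ≤ C^2*c/(|a|+1) := by
    have h := le_trans (min_le_right (t₀/2) _)
      (min_le_left (C^2*c/(|a|+1)/2) ((C*c/(2*K))^2/2))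
    rw [hδ]; linarith
  have hδ3 : 2*δ ≤ (C*c/(2*K))^2 := by
    have h := le_trans (min_le_right (t₀/2) _)
      (min_le_right (C^2*c/(|a|+1)/2) ((C*c/(2*K))^2/2))
    rw [hδ]; linarith
  have hd3 : dd ≤ C^2*c/(|a|+1) := by linarith
  have hd4 : dd ≤ (C*c/(2*K))^2 := by linarith
  have hDle : D ≤ C*c/(2*K) := by
    rw [hDdef]
    calc Real.sqrt dd ≤ Real.sqrt ((C*c/(2*K))^2) := Real.sqrt_le_sqrt hd4
    _ = C*c/(2*K) := Real.sqrt_sq (by positivity)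
  set G := Real.sqrt M - Real.sqrt m with hG
  have hG0 : 0 ≤ G := by
    rw [hG]; linarith [Real.sqrt_le_sqrt hmM]
  have hGkey : G * (Real.sqrt M + Real.sqrt m) = dd := by
    rw [hG, ← hMm]
    have h1 : Real.sqrt M ^ 2 = M := Real.sq_sqrt hM0
    have h2 : Real.sqrt m ^ 2 = m := Real.sq_sqrt hm0
    linear_combination h1 - h2
  have hG2C : G * (2*C) ≤ dd := by
    calc G * (2*C) ≤ G * (Real.sqrt M + Real.sqrt m) := by
          apply mul_le_mul_of_nonneg_left _ hG0
          linarith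
    _ = dd := hGkey
  have hda : dd * (|a|+1) ≤ C^2*c := (le_div_iff₀ habs).mp hd3
  have hGa : G * |a| ≤ C*c/2 := by
    have h1 : G * (2*C) * |a| ≤ dd * |a| :=
      mul_le_mul_of_nonneg_right hG2C (abs_nonneg a)
    have hkey : G * |a| * (2*C) ≤ (C*c/2) * (2*C) := by
      calc G * |a| * (2*C) = G * (2*C) * |a| := by ring
      _ ≤ dd * |a| := h1
      _ ≤ dd * (|a| + 1) :=
          mul_le_mul_of_nonneg_left (le_add_of_nonneg_right zero_le_one) hd.le
      _ ≤ C^2*c := hda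
      _ = (C*c/2) * (2*C) := by ring
    exact le_of_mul_le_mul_right hkey (by positivity)
  have hKD : K * D ≤ C*c/2 := by
    calc K * D ≤ K * (C*c/(2*K)) := mul_le_mul_of_nonneg_left hDle (by linarith)
    _ = C*c/2 := by field_simp
  have E1 : ∀ w ∈ Ioo (0:ℝ) 1, w ≤ v - η →
      K ≤ (Real.sqrt M * a - Real.sqrt m * stdNormalCDFInv w) / D := by
    intro w hw hwle
    have hbw : stdNormalCDFInv w ≤ b₁ := stdNormalCDFInv_monotoneOn hw hw₁ hwle
    have k4 : Real.sqrt m * stdNormalCDFInv w ≤ Real.sqrt m * b₁ :=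
      mul_le_mul_of_nonneg_left hbw (Real.sqrt_nonneg m)
    have k1 : C * c ≤ Real.sqrt m * (a - b₁) :=
      mul_le_mul hCm (min_le_left _ _) hcpos.le (Real.sqrt_nonneg m)
    have k2 : G * (-|a|) ≤ G * a := mul_le_mul_of_nonneg_left (neg_abs_le a) hG0
    have hnum : C*c/2 ≤ Real.sqrt M * a - Real.sqrt m * stdNormalCDFInv w := by
      have k5 : Real.sqrt m * (a - b₁) = Real.sqrt m * a - Real.sqrt m * b₁ := by ring
      have k6 : Real.sqrt M * a = Real.sqrt m * a + G * a := by rw [hG]; ring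
      have k2' : G * (-|a|) = -(G * |a|) := by ring
      clear_value a b₁ b₂ c C dd D m M G
      linarith only [k1, k2, k2', k4, k5, k6, hGa]
    rw [le_div_iff₀ hDpos]
    linarith only [hKD, hnum]
  have E2 : ∀ w ∈ Ioo (0:ℝ) 1, v + η ≤ w →
      (Real.sqrt M * a - Real.sqrt m * stdNormalCDFInv w) / D ≤ -K := by
    intro w hw hwle
    have hbw : b₂ ≤ stdNormalCDFInv w := stdNormalCDFInv_monotoneOn hw₂ hw hwle
    have k4 : Real.sqrt m * b₂ ≤ Real.sqrt m * stdNormalCDFInv w :=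
      mul_le_mul_of_nonneg_left hbw (Real.sqrt_nonneg m)
    have k1 : C * c ≤ Real.sqrt m * (b₂ - a) :=
      mul_le_mul hCm (min_le_right _ _) hcpos.le (Real.sqrt_nonneg m)
    have k2 : G * a ≤ G * |a| := mul_le_mul_of_nonneg_left (le_abs_self a) hG0
    have hnum : Real.sqrt M * a - Real.sqrt m * stdNormalCDFInv w ≤ -(C*c/2) := by
      have k5 : Real.sqrt m * (b₂ - a) = Real.sqrt m * b₂ - Real.sqrt m * a := by ring
      have k6 : Real.sqrt M * a = Real.sqrt m * a + G * a := by rw [hG]; ring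
      clear_value a b₁ b₂ c C dd D m M G
      linarith only [k1, k2, k4, k5, k6, hGa]
    rw [div_le_iff₀ hDpos]
    have hKD' : (-K) * D = -(K * D) := by ring
    rw [hKD']
    linarith only [hKD, hnum]
  -- the integrand as a clean function
  set F : ℝ → ℝ := fun w =>
    stdNormalCDF ((Real.sqrt M * a - Real.sqrt m * stdNormalCDFInv w) / D) with hF
  set Gf : ℝ → ℝ := (Iio v).indicator (fun _ => (1:ℝ)) with hGf
  set Hf : ℝ → ℝ := fun w => ε/2 + (Ioo (v-η) (v+η)).indicator (fun _ => (1:ℝ)) w with hHf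
  have hpsieq : psi s t u v = ∫ w in (0:ℝ)..u, F w := by
    unfold psi
    rw [if_pos hd]
    congr 1
    funext w
    rw [psiIntegrand, if_neg (not_le.2 hv0'), if_neg (not_le.2 hv1')]
  -- measurability / integrability
  have hinv : AEMeasurable stdNormalCDFInv (volume.restrict (Icc 0 u)) := by
    rw [← Measure.restrict_congr_set Ioo_ae_eq_Icc]
    exact aemeasurable_restrict_of_monotoneOn measurableSet_Ioo
      (stdNormalCDFInv_monotoneOn.mono (Ioo_subset_Ioo le_rfl hu1))
  have hFmeas : AEMeasurable F (volume.restrict (Icc 0 u)) := by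
    apply stdNormalCDF_continuous.measurable.comp_aemeasurable
    exact (aemeasurable_const.sub (hinv.const_mul _)).div_const _
  have hGmeas : AEMeasurable Gf (volume.restrict (Icc 0 u)) :=
    (measurable_const.indicator measurableSet_Iio).aemeasurable
  have hGabs : ∀ x, |Gf x| ≤ 1 := by
    intro x
    rw [hGf]
    by_cases hx : x ∈ Iio v <;> simp [indicator_apply, hx]
  have hFint : IntervalIntegrable F volume 0 u :=
    intervalIntegrable_of_bdd hu0 hFmeas fun x => abs_stdNormalCDF_le_one _
  have hGint : IntervalIntegrable Gf volume 0 u :=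
    intervalIntegrable_of_bdd hu0 hGmeas hGabs
  have hFGint : IntervalIntegrable (fun w => |F w - Gf w|) volume 0 u := by
    refine intervalIntegrable_of_bdd hu0 (continuous_abs.measurable.comp_aemeasurable (hFmeas.sub hGmeas)) (C := 2) fun x => ?_
    rw [abs_abs]
    calc |F x - Gf x| ≤ |F x| + |Gf x| := abs_sub _ _
    _ ≤ 1 + 1 := add_le_add (abs_stdNormalCDF_le_one _) (hGabs x)
    _ = 2 := by norm_num
  have hIndmeas : AEMeasurable ((Ioo (v-η) (v+η)).indicator (fun _ => (1:ℝ)))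
      (volume.restrict (Icc 0 u)) :=
    (measurable_const.indicator measurableSet_Ioo).aemeasurable
  have hIndabs : ∀ x, |(Ioo (v-η) (v+η)).indicator (fun _ => (1:ℝ)) x| ≤ 1 := by
    intro x
    by_cases hx : x ∈ Ioo (v-η) (v+η) <;> simp [indicator_apply, hx]
  have hIndint : IntervalIntegrable ((Ioo (v-η) (v+η)).indicator (fun _ => (1:ℝ)))
      volume 0 u := intervalIntegrable_of_bdd hu0 hIndmeas hIndabs
  have hHint : IntervalIntegrable Hf volume 0 u := by
    rw [hHf]
    exact (intervalIntegrable_const).add hIndint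
  -- a.e. pointwise bound
  have hae : (fun w => |F w - Gf w|) ≤ᵐ[volume.restrict (Icc 0 u)] Hf := by
    have h01 : (volume : Measure ℝ) ({0, 1} : Set ℝ) = 0 :=
      (Set.toFinite ({0,1} : Set ℝ)).measure_zero volume
    filter_upwards [ae_restrict_mem measurableSet_Icc,
      (measure_eq_zero_iff_ae_notMem.mp h01).filter_mono (ae_mono Measure.restrict_le_self)]
      with w hwIcc hwne
    have hw0 : 0 ≤ w := hwIcc.1
    have hwu : w ≤ u := hwIcc.2
    have hwne0 : w ≠ 0 := fun h => hwne (by simp [h])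
    have hwne1 : w ≠ 1 := fun h => hwne (by simp [h])
    have hwIoo : w ∈ Ioo (0:ℝ) 1 :=
      ⟨lt_of_le_of_ne hw0 (Ne.symm hwne0), lt_of_le_of_ne (le_trans hwu hu1) hwne1⟩
    have hHge : ε/2 ≤ Hf w := by
      rw [hHf]
      have : (0:ℝ) ≤ (Ioo (v-η) (v+η)).indicator (fun _ => (1:ℝ)) w :=
        indicator_nonneg (fun _ _ => zero_le_one) w
      linarith
    rcases le_or_gt w (v - η) with hcase | hcase
    · have hg : Gf w = 1 := indicator_of_mem (show w ∈ Iio v by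
        simp only [mem_Iio]; linarith) _
      have hF1 : 1 - ε/2 < F w := hK2 _ (E1 w hwIoo hcase)
      have hF2 : F w ≤ 1 := stdNormalCDF_le_one _
      rw [hg]
      rw [abs_le]
      clear_value F Gf Hf
      constructor
      · linarith only [hF1, hF2, hHge, hε]
      · linarith only [hF1, hF2, hHge, hε]
    rcases lt_or_ge w (v + η) with hcase2 | hcase2
    · have hH : Hf w = ε/2 + 1 := by
        rw [hHf]
        simp only
        rw [indicator_of_mem (show w ∈ Ioo (v-η) (v+η) from ⟨hcase, hcase2⟩)]
      rw [hH]
      have h1 : |F w| ≤ 1 := abs_stdNormalCDF_le_one _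
      have h2 : |Gf w| ≤ 1 := hGabs w
      have h3 : 0 ≤ F w := stdNormalCDF_nonneg _
      have h4 : 0 ≤ Gf w := indicator_nonneg (fun _ _ => zero_le_one) w
      rw [abs_le] at h1 h2 ⊢
      clear_value F Gf Hf
      constructor
      · linarith only [h1.1, h1.2, h2.1, h2.2, h3, h4, hε]
      · linarith only [h1.1, h1.2, h2.1, h2.2, h3, h4, hε]
    · have hg : Gf w = 0 := indicator_of_notMem (by
        simp only [mem_Iio, not_lt]; linarith) _
      have hF1 : F w < ε/2 := hK3 _ (E2 w hwIoo hcase2)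
      have hF2 : 0 ≤ F w := stdNormalCDF_nonneg _
      rw [hg, sub_zero, abs_of_nonneg hF2]
      clear_value F Gf Hf
      linarith only [hF1, hHge]
  -- putting it together
  have hGcomp : ∫ w in (0:ℝ)..u, Gf w = min u v := integral_indicator_Iio hu0 hv0
  have hHcomp : ∫ w in (0:ℝ)..u, Hf w ≤ ε/2 + 2*η := by
    rw [hHf]
    rw [intervalIntegral.integral_add intervalIntegrable_const hIndint,
      intervalIntegral.integral_const]
    have hIndval : ∫ w in (0:ℝ)..u, (Ioo (v-η) (v+η)).indicator (fun _ => (1:ℝ)) w ≤ 2*η := by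
      rw [intervalIntegral.integral_of_le hu0,
        MeasureTheory.integral_indicator_const (1:ℝ) measurableSet_Ioo,
        measureReal_restrict_apply measurableSet_Ioo, measureReal_def, smul_eq_mul, mul_one]
      have h1 : volume (Ioo (v-η) (v+η) ∩ Ioc 0 u) ≤ ENNReal.ofReal (2*η) := by
        refine le_trans (measure_mono inter_subset_left) ?_
        rw [Real.volume_Ioo]
        apply le_of_eq
        congr 1
        ring
      calc (volume (Ioo (v-η) (v+η) ∩ Ioc 0 u)).toReal
          ≤ (ENNReal.ofReal (2*η)).toReal := by
            apply ENNReal.toReal_mono ENNReal.ofReal_ne_top h1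
      _ = 2*η := ENNReal.toReal_ofReal (by linarith)
    have hconst : (u - 0) • (ε/2) ≤ ε/2 := by
      rw [smul_eq_mul, sub_zero]
      calc u * (ε/2) ≤ 1 * (ε/2) := mul_le_mul_of_nonneg_right hu1 (by linarith)
      _ = ε/2 := one_mul _
    clear_value η
    linarith only [hIndval, hconst]
  rw [hpsieq, ← hGcomp]
  rw [← intervalIntegral.integral_sub hFint hGint]
  calc |∫ w in (0:ℝ)..u, (F w - Gf w)|
      ≤ ∫ w in (0:ℝ)..u, |F w - Gf w| :=
        intervalIntegral.abs_integral_le_integral_abs hu0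
  _ ≤ ∫ w in (0:ℝ)..u, Hf w :=
        intervalIntegral.integral_mono_ae_restrict hu0 hFGint hHint hae
  _ ≤ ε/2 + 2*η := hHcomp
  _ < ε := by linarith only [hηε, hε]
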